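/- For integers a ≥ 2 and b, c ≥ 1, ∑_{l,m,n≥1} (l+m+n)^{-a} l^{-b} m^{-c} = ∑_{i=0}^{c-1} C(b-1+i, i) ζ(a, b+i, c-i) + ∑_{i=0}^{b-1} C(c-1+i, i) ζ(a, c+i, b-i). -/

import Mathlib

/-! Auxiliary lemmas -/

private lemma pf1 (x y s : ℝ) (hx : 0 < x) (hy : 0 < y) (hxy : x + y = s) : ∀ c : ℕ, 1 ≤ c →
    1 / (x * y ^ c) =
      (∑ i ∈ Finset.range c, 1 / (s ^ (1 + i) * y ^ (c - i)))
        + 1 / (s ^ c * x) := by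
  have hx' := hx.ne'
  have hy' := hy.ne'
  have hs : s ≠ 0 := by rw [← hxy]; positivity
  intro c hc
  induction c, hc using Nat.le_induction with
  | base =>
    rw [Finset.sum_range_one]
    rw [← hxy]
    field_simp
    ring
  | succ c hc ih =>
    have key : 1/(x*y^(c+1)) = 1/s * (1/(y^(c+1)) + 1/(x*y^c)) := by
      rw [← hxy]; field_simp; ring
    rw [key, ih, mul_add, mul_add, Finset.mul_sum, Finset.sum_range_succ']
    have h1 : ∀ i ∈ Finset.range c,
        1/s * (1/(s^(1+i)*y^(c-i))) = 1/(s^(1+(i+1))*y^(c+1-(i+1))) := by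
      intro i hi
      rw [Nat.succ_sub_succ]
      ring
    rw [Finset.sum_congr rfl h1]
    have e1 : 1/s * (1/ y^(c+1)) = 1/(s^(1+0) * y^(c+1-0)) := by
      norm_num; ring
    have e2 : 1/s * (1/(s^c * x)) = 1/(s^(c+1) * x) := by ring
    rw [e2, show (1:ℝ)/s * (1/ y^(c+1)) = 1/(s^(1+0) * y^(c+1-0)) from e1]
    ring

private lemma pf (x y s : ℝ) (hx : 0 < x) (hy : 0 < y) (hxy : x + y = s) :
    ∀ b : ℕ, 1 ≤ b → ∀ c : ℕ, 1 ≤ c →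
    1 / (x ^ b * y ^ c) =
      (∑ i ∈ Finset.range c, ((b - 1 + i).choose i : ℝ) / (s ^ (b + i) * y ^ (c - i)))
        + (∑ i ∈ Finset.range b, ((c - 1 + i).choose i : ℝ) / (s ^ (c + i) * x ^ (b - i))) := by
  have hx' := hx.ne'
  have hy' := hy.ne'
  have hs : s ≠ 0 := by rw [← hxy]; positivity
  intro b hb
  induction b, hb using Nat.le_induction with
  | base =>
    intro c hc
    have h0 := pf1 x y s hx hy hxy c hc
    rw [pow_one, h0, Finset.sum_range_one]
    simp [Nat.choose_self, Nat.choose_zero_right]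
  | succ b hb ihb =>
    intro c hc
    induction c, hc using Nat.le_induction with
    | base =>
      have h0 := pf1 y x s hy hx (by rw [add_comm]; exact hxy) (b+1) (by omega)
      rw [pow_one, show x^(b+1) * y = y * x^(b+1) from mul_comm _ _, h0, Finset.sum_range_one]
      simp [Nat.choose_self, Nat.choose_zero_right, Nat.add_sub_cancel]
      ring
    | succ c hc ihc =>
      have key : 1/(x^(b+1)*y^(c+1))
          = 1/s * (1/(x^b * y^(c+1))) + 1/s * (1/(x^(b+1)*y^c)) := by
        rw [← hxy]; field_simp; ring
      have hA : 1/s * (∑ i ∈ Finset.range (c+1), ((b-1+i).choose i : ℝ)/(s^(b+i)*y^(c+1-i)))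
          + 1/s * (∑ i ∈ Finset.range c, ((b+1-1+i).choose i : ℝ)/(s^(b+1+i)*y^(c-i)))
          = ∑ i ∈ Finset.range (c+1), ((b+1-1+i).choose i : ℝ)/(s^(b+1+i)*y^(c+1-i)) := by
        rw [Finset.mul_sum, Finset.mul_sum]
        conv_lhs => rw [Finset.sum_range_succ']
        conv_rhs => rw [Finset.sum_range_succ']
        rw [add_right_comm]
        congr 1
        · rw [← Finset.sum_add_distrib]
          refine Finset.sum_congr rfl fun i hi => ?_
          rw [show b - 1 + (i+1) = b + i from by omega,
            show c + 1 - (i+1) = c - i from by omega,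
            show b + 1 - 1 + (i + 1) = (b + i) + 1 from by omega,
            show b + 1 - 1 + i = b + i from by omega,
            Nat.choose_succ_succ]
          push_cast
          ring
        · norm_num
          ring
      have hB : 1/s * (∑ i ∈ Finset.range b, ((c+1-1+i).choose i : ℝ)/(s^(c+1+i)*x^(b-i)))
          + 1/s * (∑ i ∈ Finset.range (b+1), ((c-1+i).choose i : ℝ)/(s^(c+i)*x^(b+1-i)))
          = ∑ i ∈ Finset.range (b+1), ((c+1-1+i).choose i : ℝ)/(s^(c+1+i)*x^(b+1-i)) := by
        rw [Finset.mul_sum, Finset.mul_sum]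
        conv_lhs => rw [Finset.sum_range_succ']
        conv_rhs => rw [Finset.sum_range_succ']
        rw [← add_assoc]
        congr 1
        · rw [← Finset.sum_add_distrib]
          refine Finset.sum_congr rfl fun i hi => ?_
          rw [show c + 1 - 1 + i = c + i from by omega,
            show c - 1 + (i+1) = c + i from by omega,
            show b + 1 - (i+1) = b - i from by omega,
            show c + 1 - 1 + (i + 1) = (c + i) + 1 from by omega,
            Nat.choose_succ_succ]
          push_cast
          ring
        · norm_num
          ring
      rw [key, ihb (c+1) (by omega), ihc, ← hA, ← hB]
      ring

private lemma g_summable : Summable (fun n : ℕ => ((n:ℝ)+1) ^ (-((4:ℝ)/3))) := by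
  have h0 : Summable (fun n : ℕ => 1/(n:ℝ) ^ ((4:ℝ)/3)) :=
    Real.summable_one_div_nat_rpow.2 (by norm_num)
  have h1 := h0.comp_injective Nat.succ_injective
  refine h1.congr fun n => ?_
  have : ((Nat.succ n : ℕ) : ℝ) = (n:ℝ) + 1 := by push_cast; ring
  simp only [Function.comp, this]
  rw [Real.rpow_neg (by positivity), one_div]

set_option maxHeartbeats 1000000 in
private lemma summable_bound :
    Summable (fun p : ℕ×ℕ×ℕ =>
      (((p.1:ℝ)+1) * ((p.2.1:ℝ)+1) * ((p.2.2:ℝ)+1)) ^ (-((4:ℝ)/3))) := by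
  have hg := g_summable
  have hnn : ∀ n : ℕ, 0 ≤ ((n:ℝ)+1) ^ (-((4:ℝ)/3)) :=
    fun n => Real.rpow_nonneg (by positivity) _
  have h2 : Summable (fun q : ℕ×ℕ => ((q.1:ℝ)+1) ^ (-((4:ℝ)/3)) * ((q.2:ℝ)+1) ^ (-((4:ℝ)/3))) :=
    hg.mul_of_nonneg hg hnn hnn
  have h3 : Summable (fun p : ℕ×(ℕ×ℕ) => ((p.1:ℝ)+1) ^ (-((4:ℝ)/3)) *
      (((p.2.1:ℝ)+1) ^ (-((4:ℝ)/3)) * ((p.2.2:ℝ)+1) ^ (-((4:ℝ)/3)))) :=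
    hg.mul_of_nonneg h2 hnn (fun q => mul_nonneg (hnn q.1) (hnn q.2))
  refine h3.congr fun p => ?_
  rw [← Real.mul_rpow (by positivity) (by positivity),
      ← Real.mul_rpow (by positivity) (by positivity), mul_assoc]

private lemma key_ineq (x y z : ℕ) :
    (((x:ℝ)+1) * ((y:ℝ)+1) * ((z:ℝ)+1)) ^ ((4:ℝ)/3) ≤
      ((x:ℝ)+(y:ℝ)+(z:ℝ)+3)^2 * ((y:ℝ)+1) * ((z:ℝ)+1) := by
  have hXp : (0:ℝ) < (x:ℝ)+1 := by positivity
  have hYp : (0:ℝ) < (y:ℝ)+1 := by positivity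
  have hZp : (0:ℝ) < (z:ℝ)+1 := by positivity
  set X : ℝ := (x:ℝ)+1
  set Y : ℝ := (y:ℝ)+1
  set Z : ℝ := (z:ℝ)+1
  have hS : (x:ℝ)+(y:ℝ)+(z:ℝ)+3 = X + Y + Z := by ring
  rw [hS]
  have hSp : (0:ℝ) < X + Y + Z := by positivity
  have hPp : (0:ℝ) < X * Y * Z := by positivity
  have hXS : X ≤ X + Y + Z := by nlinarith
  have hYS : Y ≤ X + Y + Z := by nlinarith
  have hZS : Z ≤ X + Y + Z := by nlinarith
  have hPS : X * Y * Z ≤ (X + Y + Z) ^ (3:ℕ) := by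
    calc X * Y * Z ≤ (X+Y+Z) * (X+Y+Z) * (X+Y+Z) := by
          exact mul_le_mul (mul_le_mul hXS hYS hYp.le hSp.le) hZS hZp.le (by positivity)
      _ = (X + Y + Z) ^ (3:ℕ) := by ring
  have hGp : (0:ℝ) < (X * Y * Z) ^ ((1:ℝ)/3) := Real.rpow_pos_of_pos hPp _
  have hG3 : ((X * Y * Z) ^ ((1:ℝ)/3)) ^ (3:ℕ) = X * Y * Z := by
    rw [← Real.rpow_natCast ((X*Y*Z) ^ ((1:ℝ)/3)) 3, ← Real.rpow_mul hPp.le]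
    norm_num
  have hGS : (X * Y * Z) ^ ((1:ℝ)/3) ≤ X + Y + Z := by
    refine (pow_le_pow_iff_left₀ hGp.le hSp.le (three_ne_zero)).1 ?_
    rw [hG3]; exact hPS
  have hP43 : (X * Y * Z) ^ ((4:ℝ)/3) = (X * Y * Z) * (X * Y * Z) ^ ((1:ℝ)/3) := by
    rw [show (4:ℝ)/3 = 1 + 1/3 by norm_num, Real.rpow_add hPp, Real.rpow_one]
  rw [hP43]
  have hXG : X * (X * Y * Z) ^ ((1:ℝ)/3) ≤ (X+Y+Z) * (X+Y+Z) :=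
    mul_le_mul hXS hGS hGp.le hSp.le
  nlinarith [mul_le_mul_of_nonneg_right hXG (mul_pos hYp hZp).le]

private lemma key_ineq' (x y z : ℕ) :
    (((x:ℝ)+1) * ((y:ℝ)+1) * ((z:ℝ)+1)) ^ ((4:ℝ)/3) ≤
      ((x:ℝ)+(y:ℝ)+(z:ℝ)+3)^2 * ((x:ℝ)+1) * ((y:ℝ)+1) := by
  have h := key_ineq z x y
  have e1 : ((z:ℝ)+1)*((x:ℝ)+1)*((y:ℝ)+1) = ((x:ℝ)+1)*((y:ℝ)+1)*((z:ℝ)+1) := by ring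
  have e2 : (z:ℝ)+(x:ℝ)+(y:ℝ)+3 = (x:ℝ)+(y:ℝ)+(z:ℝ)+3 := by ring
  rw [e1, e2] at h
  exact h

private lemma summable_of_denom_ge (u D : ℕ×ℕ×ℕ → ℝ) (hu : ∀ p, u p = 1/D p)
    (hD : ∀ p, (((p.1:ℝ)+1) * ((p.2.1:ℝ)+1) * ((p.2.2:ℝ)+1)) ^ ((4:ℝ)/3) ≤ D p) :
    Summable u := by
  refine Summable.of_nonneg_of_le (fun p => ?_) (fun p => ?_) summable_bound
  · rw [hu p]
    have : (0:ℝ) < D p := lt_of_lt_of_le (Real.rpow_pos_of_pos (by positivity) _) (hD p)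
    positivity
  · rw [hu p, Real.rpow_neg (by positivity), ← one_div]
    have hpos : (0:ℝ) < (((p.1:ℝ)+1) * ((p.2.1:ℝ)+1) * ((p.2.2:ℝ)+1)) ^ ((4:ℝ)/3) :=
      Real.rpow_pos_of_pos (by positivity) _
    exact one_div_le_one_div_of_le hpos (hD p)

private lemma mul3_le {A A' B B' C C' : ℝ} (hA : 0 ≤ A) (hB : 0 ≤ B) (hC : 0 ≤ C)
    (h1 : A ≤ A') (h2 : B ≤ B') (h3 : C ≤ C') : A*B*C ≤ A'*B'*C' := by
  have hA' := hA.trans h1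
  have hB' := hB.trans h2
  exact mul_le_mul (mul_le_mul h1 h2 hB hA') h3 hC (mul_nonneg hA' hB')

private lemma summable_Z (k₁ k₂ k₃ : ℕ) (h₁ : 2 ≤ k₁) (h₂ : 1 ≤ k₂) (h₃ : 1 ≤ k₃) :
    Summable (fun p : ℕ×ℕ×ℕ =>
      1 / (((p.1:ℝ)+(p.2.1:ℝ)+(p.2.2:ℝ)+3)^k₁ * ((p.2.1:ℝ)+(p.2.2:ℝ)+2)^k₂ * ((p.2.2:ℝ)+1)^k₃)) := by
  refine summable_of_denom_ge _
    (fun p => ((p.1:ℝ)+(p.2.1:ℝ)+(p.2.2:ℝ)+3)^k₁ * ((p.2.1:ℝ)+(p.2.2:ℝ)+2)^k₂ * ((p.2.2:ℝ)+1)^k₃)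
    (fun p => rfl) (fun p => ?_)
  obtain ⟨x, y, z⟩ := p
  refine le_trans (key_ineq x y z) ?_
  have hx0 : (0:ℝ) ≤ (x:ℝ) := Nat.cast_nonneg x
  have hy0 : (0:ℝ) ≤ (y:ℝ) := Nat.cast_nonneg y
  have hz0 : (0:ℝ) ≤ (z:ℝ) := Nat.cast_nonneg z
  refine mul3_le (by positivity) (by positivity) (by positivity) ?_ ?_ ?_
  · exact pow_le_pow_right₀ (by linarith) h₁
  · refine le_trans (show (y:ℝ)+1 ≤ (y:ℝ)+(z:ℝ)+2 by linarith) ?_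
    exact le_self_pow₀ (by linarith) (by omega)
  · exact le_self_pow₀ (by linarith) (by omega)


/-- The triple zeta value `ζ(k₁, k₂, k₃) = ∑_{m₁ > m₂ > m₃ > 0} ∏ m_j^{-k_j}`. -/
noncomputable def zeta3 (k₁ k₂ k₃ : ℕ) : ℝ :=
  ∑' (a : ℕ) (b : ℕ) (c : ℕ),
    1 / (((a : ℝ) + (b : ℝ) + (c : ℝ) + 3) ^ k₁ *
         ((b : ℝ) + (c : ℝ) + 2) ^ k₂ * ((c : ℝ) + 1) ^ k₃)

private lemma zeta3_eq_tsum (k₁ k₂ k₃ : ℕ) (h₁ : 2 ≤ k₁) (h₂ : 1 ≤ k₂) (h₃ : 1 ≤ k₃) :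
    zeta3 k₁ k₂ k₃ = ∑' p : ℕ×ℕ×ℕ,
      1 / (((p.1:ℝ)+(p.2.1:ℝ)+(p.2.2:ℝ)+3)^k₁ * ((p.2.1:ℝ)+(p.2.2:ℝ)+2)^k₂ * ((p.2.2:ℝ)+1)^k₃) := by
  have hs := summable_Z k₁ k₂ k₃ h₁ h₂ h₃
  rw [zeta3]
  exact ((Summable.tsum_prod' hs fun x => hs.prod_factor x).trans
    (tsum_congr fun x => Summable.tsum_prod' (hs.prod_factor x) fun y => (hs.prod_factor x).prod_factor y)).symm

private lemma aux1 (A X Y : ℝ) : 1/(A*X*Y) = (1/A) * (1/(X*Y)) := by ring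

private lemma aux2 (C A U V : ℝ) : (1/A) * (C/(U*V)) = C * (1/(A*U*V)) := by ring

theorem A3_zeta_as_triple_zetas (a b c : ℕ) (ha : 2 ≤ a) (hb : 1 ≤ b) (hc : 1 ≤ c) :
    (∑' (l : ℕ) (m : ℕ) (n : ℕ),
      1 / (((l : ℝ) + (m : ℝ) + (n : ℝ) + 3) ^ a * ((l : ℝ) + 1) ^ b * ((m : ℝ) + 1) ^ c)) =
      (∑ i ∈ Finset.range c, (Nat.choose (b - 1 + i) i : ℝ) * zeta3 a (b + i) (c - i)) +
      (∑ i ∈ Finset.range b, (Nat.choose (c - 1 + i) i : ℝ) * zeta3 a (c + i) (b - i)) := by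
  -- Summability of the main family
  have hFs : Summable (fun p : ℕ×ℕ×ℕ =>
      1 / (((p.1:ℝ)+(p.2.1:ℝ)+(p.2.2:ℝ)+3)^a * ((p.1:ℝ)+1)^b * ((p.2.1:ℝ)+1)^c)) := by
    refine summable_of_denom_ge _
      (fun p => ((p.1:ℝ)+(p.2.1:ℝ)+(p.2.2:ℝ)+3)^a * ((p.1:ℝ)+1)^b * ((p.2.1:ℝ)+1)^c)
      (fun p => rfl) (fun p => ?_)
    obtain ⟨l, m, n⟩ := p
    refine le_trans (key_ineq' l m n) ?_
    have hl0 : (0:ℝ) ≤ (l:ℝ) := Nat.cast_nonneg l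
    have hm0 : (0:ℝ) ≤ (m:ℝ) := Nat.cast_nonneg m
    have hn0 : (0:ℝ) ≤ (n:ℝ) := Nat.cast_nonneg n
    refine mul3_le (by positivity) (by positivity) (by positivity) ?_ ?_ ?_
    · exact pow_le_pow_right₀ (by linarith) ha
    · exact le_self_pow₀ (by linarith) (by omega)
    · exact le_self_pow₀ (by linarith) (by omega)
  -- Summability of the first decomposed family
  have hH1 : ∀ i ∈ Finset.range c, Summable (fun p : ℕ×ℕ×ℕ =>
      1 / (((p.1:ℝ)+(p.2.1:ℝ)+(p.2.2:ℝ)+3)^a * ((p.1:ℝ)+(p.2.1:ℝ)+2)^(b+i) * ((p.2.1:ℝ)+1)^(c-i))) := by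
    intro i hi
    have hic := Finset.mem_range.1 hi
    refine summable_of_denom_ge _
      (fun p => ((p.1:ℝ)+(p.2.1:ℝ)+(p.2.2:ℝ)+3)^a * ((p.1:ℝ)+(p.2.1:ℝ)+2)^(b+i) * ((p.2.1:ℝ)+1)^(c-i))
      (fun p => rfl) (fun p => ?_)
    obtain ⟨l, m, n⟩ := p
    refine le_trans (key_ineq' l m n) ?_
    have hl0 : (0:ℝ) ≤ (l:ℝ) := Nat.cast_nonneg l
    have hm0 : (0:ℝ) ≤ (m:ℝ) := Nat.cast_nonneg m
    have hn0 : (0:ℝ) ≤ (n:ℝ) := Nat.cast_nonneg n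
    refine mul3_le (by positivity) (by positivity) (by positivity) ?_ ?_ ?_
    · exact pow_le_pow_right₀ (by linarith) ha
    · refine le_trans (show (l:ℝ)+1 ≤ (l:ℝ)+(m:ℝ)+2 by linarith) ?_
      exact le_self_pow₀ (by linarith) (by omega)
    · exact le_self_pow₀ (by linarith) (by omega)
  -- Summability of the second decomposed family
  have hH2 : ∀ i ∈ Finset.range b, Summable (fun p : ℕ×ℕ×ℕ =>
      1 / (((p.1:ℝ)+(p.2.1:ℝ)+(p.2.2:ℝ)+3)^a * ((p.1:ℝ)+(p.2.1:ℝ)+2)^(c+i) * ((p.1:ℝ)+1)^(b-i))) := by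
    intro i hi
    have hib := Finset.mem_range.1 hi
    refine summable_of_denom_ge _
      (fun p => ((p.1:ℝ)+(p.2.1:ℝ)+(p.2.2:ℝ)+3)^a * ((p.1:ℝ)+(p.2.1:ℝ)+2)^(c+i) * ((p.1:ℝ)+1)^(b-i))
      (fun p => rfl) (fun p => ?_)
    obtain ⟨l, m, n⟩ := p
    refine le_trans (key_ineq' l m n) ?_
    have hl0 : (0:ℝ) ≤ (l:ℝ) := Nat.cast_nonneg l
    have hm0 : (0:ℝ) ≤ (m:ℝ) := Nat.cast_nonneg m
    have hn0 : (0:ℝ) ≤ (n:ℝ) := Nat.cast_nonneg n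
    rw [show ((l:ℝ)+(m:ℝ)+(n:ℝ)+3)^2 * ((l:ℝ)+1) * ((m:ℝ)+1)
        = ((l:ℝ)+(m:ℝ)+(n:ℝ)+3)^2 * ((m:ℝ)+1) * ((l:ℝ)+1) from by ring]
    refine mul3_le (by positivity) (by positivity) (by positivity) ?_ ?_ ?_
    · exact pow_le_pow_right₀ (by linarith) ha
    · refine le_trans (show (m:ℝ)+1 ≤ (l:ℝ)+(m:ℝ)+2 by linarith) ?_
      exact le_self_pow₀ (by linarith) (by omega)
    · exact le_self_pow₀ (by linarith) (by omega)
  -- Pointwise partial fraction decomposition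
  have hpt : ∀ p : ℕ×ℕ×ℕ,
      1 / (((p.1:ℝ)+(p.2.1:ℝ)+(p.2.2:ℝ)+3)^a * ((p.1:ℝ)+1)^b * ((p.2.1:ℝ)+1)^c)
      = (∑ i ∈ Finset.range c, ((b-1+i).choose i : ℝ) *
          (1 / (((p.1:ℝ)+(p.2.1:ℝ)+(p.2.2:ℝ)+3)^a * ((p.1:ℝ)+(p.2.1:ℝ)+2)^(b+i) * ((p.2.1:ℝ)+1)^(c-i))))
      + (∑ i ∈ Finset.range b, ((c-1+i).choose i : ℝ) *
          (1 / (((p.1:ℝ)+(p.2.1:ℝ)+(p.2.2:ℝ)+3)^a * ((p.1:ℝ)+(p.2.1:ℝ)+2)^(c+i) * ((p.1:ℝ)+1)^(b-i)))) := by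
    intro p
    obtain ⟨l, m, n⟩ := p
    have hx : (0:ℝ) < (l:ℝ)+1 := by positivity
    have hy : (0:ℝ) < (m:ℝ)+1 := by positivity
    have hpf := pf ((l:ℝ)+1) ((m:ℝ)+1) ((l:ℝ)+(m:ℝ)+2) hx hy (by ring) b hb c hc
    rw [aux1, hpf, mul_add, Finset.mul_sum, Finset.mul_sum]
    congr 1
    · exact Finset.sum_congr rfl fun i hi => aux2 _ _ _ _
    · exact Finset.sum_congr rfl fun i hi => aux2 _ _ _ _
  -- Reindexing: the decomposed sums are triple zeta values
  have hz1 : ∀ i ∈ Finset.range c, (∑' p : ℕ×ℕ×ℕ,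
      1 / (((p.1:ℝ)+(p.2.1:ℝ)+(p.2.2:ℝ)+3)^a * ((p.1:ℝ)+(p.2.1:ℝ)+2)^(b+i) * ((p.2.1:ℝ)+1)^(c-i)))
      = zeta3 a (b+i) (c-i) := by
    intro i hi
    have hic := Finset.mem_range.1 hi
    rw [zeta3_eq_tsum a (b+i) (c-i) ha (by omega) (by omega)]
    have he := Equiv.tsum_eq
      (⟨fun p => (p.2.2, p.1, p.2.1), fun p => (p.2.1, p.2.2, p.1), fun _ => rfl, fun _ => rfl⟩ :
        (ℕ×ℕ×ℕ) ≃ (ℕ×ℕ×ℕ))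
      (fun q : ℕ×ℕ×ℕ =>
        1 / (((q.1:ℝ)+(q.2.1:ℝ)+(q.2.2:ℝ)+3)^a * ((q.2.1:ℝ)+(q.2.2:ℝ)+2)^(b+i) * ((q.2.2:ℝ)+1)^(c-i)))
    rw [← he]
    refine tsum_congr fun p => ?_
    show (1:ℝ) / (((p.1:ℝ)+(p.2.1:ℝ)+(p.2.2:ℝ)+3)^a * ((p.1:ℝ)+(p.2.1:ℝ)+2)^(b+i) * ((p.2.1:ℝ)+1)^(c-i))
      = 1 / (((p.2.2:ℝ)+(p.1:ℝ)+(p.2.1:ℝ)+3)^a * ((p.1:ℝ)+(p.2.1:ℝ)+2)^(b+i) * ((p.2.1:ℝ)+1)^(c-i))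
    rw [show ((p.2.2:ℝ)+(p.1:ℝ)+(p.2.1:ℝ)+3) = ((p.1:ℝ)+(p.2.1:ℝ)+(p.2.2:ℝ)+3) from by ring]
  have hz2 : ∀ i ∈ Finset.range b, (∑' p : ℕ×ℕ×ℕ,
      1 / (((p.1:ℝ)+(p.2.1:ℝ)+(p.2.2:ℝ)+3)^a * ((p.1:ℝ)+(p.2.1:ℝ)+2)^(c+i) * ((p.1:ℝ)+1)^(b-i)))
      = zeta3 a (c+i) (b-i) := by
    intro i hi
    have hib := Finset.mem_range.1 hi
    rw [zeta3_eq_tsum a (c+i) (b-i) ha (by omega) (by omega)]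
    have he := Equiv.tsum_eq
      (⟨fun p => (p.2.2, p.2.1, p.1), fun p => (p.2.2, p.2.1, p.1), fun _ => rfl, fun _ => rfl⟩ :
        (ℕ×ℕ×ℕ) ≃ (ℕ×ℕ×ℕ))
      (fun q : ℕ×ℕ×ℕ =>
        1 / (((q.1:ℝ)+(q.2.1:ℝ)+(q.2.2:ℝ)+3)^a * ((q.2.1:ℝ)+(q.2.2:ℝ)+2)^(c+i) * ((q.2.2:ℝ)+1)^(b-i)))
    rw [← he]
    refine tsum_congr fun p => ?_
    show (1:ℝ) / (((p.1:ℝ)+(p.2.1:ℝ)+(p.2.2:ℝ)+3)^a * ((p.1:ℝ)+(p.2.1:ℝ)+2)^(c+i) * ((p.1:ℝ)+1)^(b-i))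
      = 1 / (((p.2.2:ℝ)+(p.2.1:ℝ)+(p.1:ℝ)+3)^a * ((p.2.1:ℝ)+(p.1:ℝ)+2)^(c+i) * ((p.1:ℝ)+1)^(b-i))
    rw [show ((p.2.2:ℝ)+(p.2.1:ℝ)+(p.1:ℝ)+3) = ((p.1:ℝ)+(p.2.1:ℝ)+(p.2.2:ℝ)+3) from by ring,
      show ((p.2.1:ℝ)+(p.1:ℝ)+2) = ((p.1:ℝ)+(p.2.1:ℝ)+2) from by ring]
  -- Assembling
  have hsum1 : Summable (fun p : ℕ×ℕ×ℕ => ∑ i ∈ Finset.range c, ((b-1+i).choose i : ℝ) *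
      (1 / (((p.1:ℝ)+(p.2.1:ℝ)+(p.2.2:ℝ)+3)^a * ((p.1:ℝ)+(p.2.1:ℝ)+2)^(b+i) * ((p.2.1:ℝ)+1)^(c-i)))) :=
    summable_sum (fun i hi => (hH1 i hi).mul_left _)
  have hsum2 : Summable (fun p : ℕ×ℕ×ℕ => ∑ i ∈ Finset.range b, ((c-1+i).choose i : ℝ) *
      (1 / (((p.1:ℝ)+(p.2.1:ℝ)+(p.2.2:ℝ)+3)^a * ((p.1:ℝ)+(p.2.1:ℝ)+2)^(c+i) * ((p.1:ℝ)+1)^(b-i)))) :=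
    summable_sum (fun i hi => (hH2 i hi).mul_left _)
  calc (∑' (l : ℕ) (m : ℕ) (n : ℕ),
      1 / (((l : ℝ) + (m : ℝ) + (n : ℝ) + 3) ^ a * ((l : ℝ) + 1) ^ b * ((m : ℝ) + 1) ^ c))
      = ∑' p : ℕ×ℕ×ℕ,
        1 / (((p.1:ℝ)+(p.2.1:ℝ)+(p.2.2:ℝ)+3)^a * ((p.1:ℝ)+1)^b * ((p.2.1:ℝ)+1)^c) :=
        ((Summable.tsum_prod' hFs fun l => hFs.prod_factor l).trans
          (tsum_congr fun l => Summable.tsum_prod' (hFs.prod_factor l)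
            fun m => (hFs.prod_factor l).prod_factor m)).symm
    _ = ∑' p : ℕ×ℕ×ℕ,
        ((∑ i ∈ Finset.range c, ((b-1+i).choose i : ℝ) *
          (1 / (((p.1:ℝ)+(p.2.1:ℝ)+(p.2.2:ℝ)+3)^a * ((p.1:ℝ)+(p.2.1:ℝ)+2)^(b+i) * ((p.2.1:ℝ)+1)^(c-i))))
        + (∑ i ∈ Finset.range b, ((c-1+i).choose i : ℝ) *
          (1 / (((p.1:ℝ)+(p.2.1:ℝ)+(p.2.2:ℝ)+3)^a * ((p.1:ℝ)+(p.2.1:ℝ)+2)^(c+i) * ((p.1:ℝ)+1)^(b-i))))) :=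
        tsum_congr hpt
    _ = (∑' p : ℕ×ℕ×ℕ, ∑ i ∈ Finset.range c, ((b-1+i).choose i : ℝ) *
          (1 / (((p.1:ℝ)+(p.2.1:ℝ)+(p.2.2:ℝ)+3)^a * ((p.1:ℝ)+(p.2.1:ℝ)+2)^(b+i) * ((p.2.1:ℝ)+1)^(c-i))))
        + (∑' p : ℕ×ℕ×ℕ, ∑ i ∈ Finset.range b, ((c-1+i).choose i : ℝ) *
          (1 / (((p.1:ℝ)+(p.2.1:ℝ)+(p.2.2:ℝ)+3)^a * ((p.1:ℝ)+(p.2.1:ℝ)+2)^(c+i) * ((p.1:ℝ)+1)^(b-i)))) :=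
        Summable.tsum_add hsum1 hsum2
    _ = (∑ i ∈ Finset.range c, ∑' p : ℕ×ℕ×ℕ, ((b-1+i).choose i : ℝ) *
          (1 / (((p.1:ℝ)+(p.2.1:ℝ)+(p.2.2:ℝ)+3)^a * ((p.1:ℝ)+(p.2.1:ℝ)+2)^(b+i) * ((p.2.1:ℝ)+1)^(c-i))))
        + (∑ i ∈ Finset.range b, ∑' p : ℕ×ℕ×ℕ, ((c-1+i).choose i : ℝ) *
          (1 / (((p.1:ℝ)+(p.2.1:ℝ)+(p.2.2:ℝ)+3)^a * ((p.1:ℝ)+(p.2.1:ℝ)+2)^(c+i) * ((p.1:ℝ)+1)^(b-i)))) := by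
        rw [Summable.tsum_finsetSum (fun i hi => (hH1 i hi).mul_left _),
          Summable.tsum_finsetSum (fun i hi => (hH2 i hi).mul_left _)]
    _ = (∑ i ∈ Finset.range c, (Nat.choose (b - 1 + i) i : ℝ) * zeta3 a (b + i) (c - i)) +
        (∑ i ∈ Finset.range b, (Nat.choose (c - 1 + i) i : ℝ) * zeta3 a (c + i) (b - i)) := by
        congr 1
        · exact Finset.sum_congr rfl fun i hi => by rw [tsum_mul_left, hz1 i hi]
        · exact Finset.sum_congr rfl fun i hi => by rw [tsum_mul_left, hz2 i hi]
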